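/- arXiv:1406.6240 — 4 statements merged into one kernel-verified Lean document; each statement's English description precedes it below -/
import Mathlib

section
/- Let E be a real inner product space of finite dimension n ≥ 1, let m ≥ 1, and let v₁, …, v_m ∈ E be pairwise orthogonal vectors (⟨v_i, v_j⟩ = 0 for i ≠ j). Then ∑_{1 ≤ i < j ≤ m} ‖v_i‖² ‖v_j‖² ≤ ((n−1)/(2n)) · (∑_{i=1}^m ‖v_i‖²)². -/
open scoped RealInnerProductSpace

theorem stmt_6 (E : Type*) [NormedAddCommGroup E] [InnerProductSpace ℝ E]
    (n : ℕ) (hn : 1 ≤ n) (hdim : Module.finrank ℝ E = n)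
    (m : ℕ) (hm : 1 ≤ m) (v : Fin m → E)
    (horth : ∀ i j : Fin m, i ≠ j → ⟪v i, v j⟫ = 0) :
    ∑ i : Fin m, ∑ j ∈ Finset.Ioi i, ‖v i‖ ^ 2 * ‖v j‖ ^ 2 ≤
      ((n - 1 : ℝ) / (2 * n)) * (∑ i : Fin m, ‖v i‖ ^ 2) ^ 2 := by
  classical
  set a : Fin m → ℝ := fun i => ‖v i‖ ^ 2 with ha
  set S : ℝ := ∑ i : Fin m, a i with hS
  set T : ℝ := ∑ i : Fin m, ∑ j ∈ Finset.Ioi i, a i * a j with hT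
  set Q : ℝ := ∑ i : Fin m, a i ^ 2 with hQ
  have eIio : ∀ i : Fin m, Finset.Iio i = Finset.univ.filter (fun j => j < i) := by
    intro i; ext j; simp
  have eIoi : ∀ i : Fin m, Finset.Ioi i = Finset.univ.filter (fun j => i < j) := by
    intro i; ext j; simp
  -- symmetry of the off-diagonal sums
  have hswap : ∑ i : Fin m, ∑ j ∈ Finset.Iio i, a i * a j = T := by
    calc ∑ i : Fin m, ∑ j ∈ Finset.Iio i, a i * a j
        = ∑ i : Fin m, ∑ j : Fin m, if j < i then a i * a j else 0 := by
          refine Finset.sum_congr rfl fun i _ => ?_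
          rw [eIio i, Finset.sum_filter]
      _ = ∑ j : Fin m, ∑ i : Fin m, if j < i then a i * a j else 0 := Finset.sum_comm
      _ = ∑ j : Fin m, ∑ i ∈ Finset.Ioi j, a i * a j := by
          refine Finset.sum_congr rfl fun j _ => ?_
          rw [eIoi j, Finset.sum_filter]
      _ = T := by
          rw [hT]
          exact Finset.sum_congr rfl fun j _ =>
            Finset.sum_congr rfl fun i _ => mul_comm _ _
  -- the key identity S^2 = Q + 2T
  have hid : S ^ 2 = Q + 2 * T := by
    have huniv : ∀ i : Fin m, (Finset.univ : Finset (Fin m)) =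
        insert i (Finset.Iio i ∪ Finset.Ioi i) := by
      intro i
      ext j
      simp only [Finset.mem_insert, Finset.mem_union, Finset.mem_Iio, Finset.mem_Ioi,
        Finset.mem_univ, true_iff]
      rcases lt_trichotomy j i with h | h | h
      exacts [Or.inr (Or.inl h), Or.inl h, Or.inr (Or.inr h)]
    have hmul : S * S = ∑ i : Fin m, ∑ j : Fin m, a i * a j := by
      rw [hS, Finset.sum_mul_sum]
    have hdisj : ∀ i : Fin m, Disjoint (Finset.Iio i) (Finset.Ioi i) := by
      intro i
      simp only [Finset.disjoint_left, Finset.mem_Iio, Finset.mem_Ioi]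
      intro j hj
      exact not_lt.mpr (le_of_lt hj)
    have h2 : ∑ i : Fin m, a i * a i = Q := by
      rw [hQ]; exact Finset.sum_congr rfl fun i _ => (sq (a i)).symm
    calc S ^ 2 = ∑ i : Fin m, ∑ j : Fin m, a i * a j := by rw [sq]; exact hmul
      _ = ∑ i : Fin m, (a i * a i + (∑ j ∈ Finset.Iio i, a i * a j
            + ∑ j ∈ Finset.Ioi i, a i * a j)) := by
          refine Finset.sum_congr rfl fun i _ => ?_
          rw [huniv i, Finset.sum_insert (by simp), Finset.sum_union (hdisj i)]
      _ = Q + 2 * T := by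
          rw [Finset.sum_add_distrib, Finset.sum_add_distrib, hswap, ← hT, h2]
          ring
  -- the support has at most n elements
  have hfd : FiniteDimensional ℝ E := FiniteDimensional.of_finrank_pos (by omega)
  set s : Finset (Fin m) := Finset.univ.filter (fun i => v i ≠ 0) with hs
  have hcard : (s.card : ℝ) ≤ n := by
    have hon : Orthonormal ℝ (fun i : s => (‖v i.1‖)⁻¹ • v i.1) := by
      rw [orthonormal_iff_ite]
      intro i j
      by_cases h : i = j
      · subst h
        have hvi : v i.1 ≠ 0 := (Finset.mem_filter.mp i.2).2
        have hni : ‖v i.1‖ ≠ 0 := norm_ne_zero_iff.mpr hvi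
        rw [if_pos rfl, real_inner_smul_left, real_inner_smul_right,
          real_inner_self_eq_norm_sq]
        field_simp
      · have hij : i.1 ≠ j.1 := fun hh => h (Subtype.ext hh)
        rw [if_neg h, real_inner_smul_left, real_inner_smul_right, horth _ _ hij]
        ring
    have hli := hon.linearIndependent
    have hle := hli.fintype_card_le_finrank
    rw [hdim, Fintype.card_coe] at hle
    exact_mod_cast hle
  -- sums restrict to s
  have hzero : ∀ i : Fin m, i ∉ s → a i = 0 := by
    intro i hi
    simp only [hs, Finset.mem_filter, Finset.mem_univ, true_and, not_not] at hi
    simp [ha, hi]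
  have hSs : S = ∑ i ∈ s, a i := by
    rw [hS]
    exact (Finset.sum_subset (Finset.subset_univ s) (fun i _ hi => hzero i hi)).symm
  have hQs : Q = ∑ i ∈ s, a i ^ 2 := by
    rw [hQ]
    refine (Finset.sum_subset (Finset.subset_univ s) (fun i _ hi => ?_)).symm
    rw [hzero i hi]; ring
  -- Cauchy–Schwarz
  have hcs : S ^ 2 ≤ (n : ℝ) * Q := by
    rw [hSs, hQs]
    calc (∑ i ∈ s, a i) ^ 2 ≤ (s.card : ℝ) * ∑ i ∈ s, a i ^ 2 :=
          sq_sum_le_card_mul_sum_sq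
      _ ≤ (n : ℝ) * ∑ i ∈ s, a i ^ 2 := by
          apply mul_le_mul_of_nonneg_right hcard
          positivity
  -- conclude
  have hn' : (0 : ℝ) < n := by exact_mod_cast hn
  rw [div_mul_eq_mul_div, le_div_iff₀ (by positivity)]
  nlinarith [hid, hcs]
end

section
/- Let c > 0. Then ∫₀^π ( 2·c·tan(s/2) / (1 + c²·tan²(s/2)) )⁴ ds = π·c·(c² + 4c + 1) / (c + 1)⁴. -/
open Real

lemma tan_half_id (c s : ℝ) :
    2*c*tan (s/2)/(1+c^2*tan (s/2)^2) = 2*c*sin s/((1+c^2)+(1-c^2)*cos s) := by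
  have h1 : sin s = 2*sin (s/2)*cos (s/2) := by
    have := Real.sin_two_mul (s/2); rwa [show 2*(s/2) = s by ring] at this
  have h2 : cos s = 2*cos (s/2)^2 - 1 := by
    have := Real.cos_two_mul (s/2); rwa [show 2*(s/2) = s by ring] at this
  rcases eq_or_ne (cos (s/2)) 0 with h | h
  · rw [Real.tan_eq_sin_div_cos, h, div_zero, h1, h]
    simp
  · have hp : sin (s/2)^2 = 1 - cos (s/2)^2 := by
      have := Real.sin_sq_add_cos_sq (s/2); linarith
    have hu2 : (0:ℝ) < cos (s/2)^2 := by positivity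
    have hnn : (0:ℝ) ≤ 1 - cos (s/2)^2 := by nlinarith [sq_nonneg (sin (s/2))]
    have hX : cos (s/2)^2 + c^2*sin (s/2)^2 ≠ 0 := by
      rw [hp]; nlinarith [sq_nonneg c, mul_nonneg (sq_nonneg c) hnn]
    have hdeq : (1+c^2)+(1-c^2)*cos s = 2*(cos (s/2)^2 + c^2*sin (s/2)^2) := by
      rw [h2]; linear_combination (-2)*c^2*hp
    rw [Real.tan_eq_sin_div_cos, h1, hdeq]
    have lhs_eq : 2*c*(sin (s/2)/cos (s/2))/(1+c^2*(sin (s/2)/cos (s/2))^2)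
        = 2*c*sin (s/2)*cos (s/2)/(cos (s/2)^2 + c^2*sin (s/2)^2) := by
      rw [div_pow]
      rw [show 1+c^2*(sin (s/2)^2/cos (s/2)^2) = (cos (s/2)^2 + c^2*sin (s/2)^2)/cos (s/2)^2 by field_simp]
      field_simp
    rw [lhs_eq, div_eq_div_iff hX (by simpa using hX)]
    ring

set_option maxHeartbeats 2000000 in
theorem stmt_13 (c : ℝ) (hc : 0 < c) :
    ∫ s in (0:ℝ)..π, (2 * c * tan (s / 2) / (1 + c ^ 2 * tan (s / 2) ^ 2)) ^ 4 =
      π * c * (c ^ 2 + 4 * c + 1) / (c + 1) ^ 4 := by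
  have hstep : ∀ s : ℝ, (2 * c * tan (s / 2) / (1 + c ^ 2 * tan (s / 2) ^ 2)) ^ 4
      = (2*c*sin s/((1+c^2)+(1-c^2)*cos s))^4 := fun s => by rw [tan_half_id]
  rw [intervalIntegral.integral_congr (fun s _ => hstep s)]
  have hD : ∀ s : ℝ, 0 < (1+c^2)+(1-c^2)*cos s := by
    intro s
    nlinarith [Real.neg_one_le_cos s, Real.cos_le_one s,
      mul_nonneg (mul_pos hc hc).le (by linarith [Real.cos_le_one s] : (0:ℝ) ≤ 1 - cos s),
      mul_nonneg (mul_pos hc hc).le (by linarith [Real.neg_one_le_cos s] : (0:ℝ) ≤ 1 + cos s)]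
  have hfc : Continuous (fun s => (2*c*sin s/((1+c^2)+(1-c^2)*cos s))^4) := by
    exact (Continuous.div (by continuity) (by continuity) (fun s => (hD s).ne')).pow 4
  rcases eq_or_ne c 1 with rfl | hc1
  · have : ∀ s : ℝ, (2*(1:ℝ)*sin s/((1+(1:ℝ)^2)+(1-(1:ℝ)^2)*cos s))^4 = sin s ^ 4 := by
      intro s; norm_num
    rw [intervalIntegral.integral_congr (fun s _ => this s)]
    rw [show (4:ℕ) = 2 + 2 from rfl, integral_sin_pow 2, integral_sin_pow 0]
    simp
    ring
  · have hB : (1:ℝ)-c^2 ≠ 0 := by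
      intro h
      have : c = 1 := by nlinarith
      exact hc1 this
    set F : ℝ → ℝ := fun s => (16*c^4/(1-c^2)^4)*s - (c*(1+c^2)*(2*(1+c^2)^2-3*(1-c^2)^2)/(1-c^2)^4)*arccos (((1-c^2)+(1+c^2)*cos s)/((1+c^2)+(1-c^2)*cos s)) + sin s * ((16*c^4/(3*(1-c^2)))*(1-(cos s)^2) - (4*c^2*((1-c^2)^2+((1+c^2)^2-2*(1-c^2)^2))/(1-c^2)^3)*((1+c^2)+(1-c^2)*(cos s))^2 - (2*(1+c^2)*c^2/(1-c^2)^2)*(((1-c^2)+(1+c^2)*(cos s))*((1+c^2)+(1-c^2)*(cos s))))/((1+c^2)+(1-c^2)*cos s)^3 with hF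
    have hderiv : ∀ s ∈ Set.Ioo (0:ℝ) π,
        HasDerivAt F ((2*c*sin s/((1+c^2)+(1-c^2)*cos s))^4) s := by
      rintro s ⟨hs0, hsπ⟩
      have hsin : 0 < sin s := Real.sin_pos_of_pos_of_lt_pi hs0 hsπ
      have hp : sin s^2 = 1 - cos s^2 := by
        have := Real.sin_sq_add_cos_sq s; linarith
      have hDs := hD s
      have hDne : ((1+c^2)+(1-c^2)*cos s) ≠ 0 := hDs.ne'
      -- derivative of inner rational map g
      have hg : HasDerivAt (fun s => ((1-c^2)+(1+c^2)*cos s)/((1+c^2)+(1-c^2)*cos s))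
          ((-((1+c^2)*sin s) * ((1+c^2)+(1-c^2)*cos s) - ((1-c^2)+(1+c^2)*cos s) * (-((1-c^2)*sin s)))/((1+c^2)+(1-c^2)*cos s)^2) s := by
        have h1 : HasDerivAt (fun s : ℝ => (1-c^2)+(1+c^2)*cos s) (-((1+c^2)*sin s)) s := by
          simpa [mul_comm, mul_assoc] using ((Real.hasDerivAt_cos s).const_mul (1+c^2)).const_add (1-c^2)
        have h2 : HasDerivAt (fun s : ℝ => (1+c^2)+(1-c^2)*cos s) (-((1-c^2)*sin s)) s := by
          simpa [mul_comm, mul_assoc] using ((Real.hasDerivAt_cos s).const_mul (1-c^2)).const_add (1+c^2)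
        exact h1.div h2 hDne
      -- |g| < 1
      have hg2 : (((1-c^2)+(1+c^2)*cos s)/((1+c^2)+(1-c^2)*cos s))^2 < 1 := by
        rw [div_pow, div_lt_one (by positivity)]
        nlinarith [hp, sq_nonneg (sin s), mul_pos (mul_pos hc hc) (mul_pos hsin hsin)]
      have hgne1 : (((1-c^2)+(1+c^2)*cos s)/((1+c^2)+(1-c^2)*cos s)) ≠ 1 := by
        intro h; rw [h] at hg2; norm_num at hg2
      have hgnem1 : (((1-c^2)+(1+c^2)*cos s)/((1+c^2)+(1-c^2)*cos s)) ≠ -1 := by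
        intro h; rw [h] at hg2; norm_num at hg2
      have hsq : 1 - (((1-c^2)+(1+c^2)*cos s)/((1+c^2)+(1-c^2)*cos s))^2
          = (2*c*sin s/((1+c^2)+(1-c^2)*cos s))^2 := by
        rw [div_pow, div_pow, show (2*c*sin s)^2 = 4*c^2*(sin s^2) by ring, hp]
        field_simp
        ring
      have hsqrt : Real.sqrt (1 - (((1-c^2)+(1+c^2)*cos s)/((1+c^2)+(1-c^2)*cos s))^2)
          = 2*c*sin s/((1+c^2)+(1-c^2)*cos s) := by
        rw [hsq]
        exact Real.sqrt_sq (by positivity)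
      have harc : HasDerivAt (fun s => arccos (((1-c^2)+(1+c^2)*cos s)/((1+c^2)+(1-c^2)*cos s)))
          (2*c/((1+c^2)+(1-c^2)*cos s)) s := by
        have hcomp := (Real.hasDerivAt_arccos hgnem1 hgne1).comp s hg
        rw [Function.comp_def] at hcomp
        refine hcomp.congr_deriv (Eq.symm ?_)
        rw [hsqrt]
        field_simp
        ring
      -- derivative of W ∘ cos
      have hW : HasDerivAt (fun x : ℝ => ((16*c^4/(3*(1-c^2)))*(1-x^2) - (4*c^2*((1-c^2)^2+((1+c^2)^2-2*(1-c^2)^2))/(1-c^2)^3)*((1+c^2)+(1-c^2)*x)^2 - (2*(1+c^2)*c^2/(1-c^2)^2)*(((1-c^2)+(1+c^2)*x)*((1+c^2)+(1-c^2)*x)))) (((16*c^4/(3*(1-c^2)))*(-(2*(cos s))) - (4*c^2*((1-c^2)^2+((1+c^2)^2-2*(1-c^2)^2))/(1-c^2)^3)*(2*((1+c^2)+(1-c^2)*(cos s))*(1-c^2)) - (2*(1+c^2)*c^2/(1-c^2)^2)*(((1+c^2)*((1+c^2)+(1-c^2)*(cos s)) + ((1-c^2)+(1+c^2)*(cos s))*(1-c^2)))))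 (cos s) := by
        apply HasDerivAt.sub
        apply HasDerivAt.sub
        · exact ((hasDerivAt_pow 2 (cos s)).const_sub 1).const_mul _ |>.congr_deriv (by (try simp only [id_eq]); ring)
        · exact ((((hasDerivAt_id (cos s)).const_mul (1-c^2)).const_add (1+c^2)).pow 2).const_mul _ |>.congr_deriv (by (try simp only [id_eq]); ring)
        · exact ((((hasDerivAt_id (cos s)).const_mul (1+c^2)).const_add (1-c^2)).mul
            (((hasDerivAt_id (cos s)).const_mul (1-c^2)).const_add (1+c^2))).const_mul _ |>.congr_deriv (by (try simp only [id_eq]); ring)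
      have hnum : HasDerivAt (fun s => sin s * ((16*c^4/(3*(1-c^2)))*(1-(cos s)^2) - (4*c^2*((1-c^2)^2+((1+c^2)^2-2*(1-c^2)^2))/(1-c^2)^3)*((1+c^2)+(1-c^2)*(cos s))^2 - (2*(1+c^2)*c^2/(1-c^2)^2)*(((1-c^2)+(1+c^2)*(cos s))*((1+c^2)+(1-c^2)*(cos s)))))
          (cos s * ((16*c^4/(3*(1-c^2)))*(1-(cos s)^2) - (4*c^2*((1-c^2)^2+((1+c^2)^2-2*(1-c^2)^2))/(1-c^2)^3)*((1+c^2)+(1-c^2)*(cos s))^2 - (2*(1+c^2)*c^2/(1-c^2)^2)*(((1-c^2)+(1+c^2)*(cos s))*((1+c^2)+(1-c^2)*(cos s)))) + sin s * (((16*c^4/(3*(1-c^2)))*(-(2*(cos s))) - (4*c^2*((1-c^2)^2+((1+c^2)^2-2*(1-c^2)^2))/(1-c^2)^3)*(2*((1+c^2)+(1-c^2)*(cos s))*(1-c^2)) - (2*(1+c^2)*c^2/(1-c^2)^2)*(((1+c^2)*((1+c^2)+(1-c^2)*(cos s)) + ((1-c^2)+(1+c^2)*(cos s))*(1-c^2))))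 * -sin s)) s :=
        (Real.hasDerivAt_sin s).mul (hW.comp s (Real.hasDerivAt_cos s))
      have hden : HasDerivAt (fun s => ((1+c^2)+(1-c^2)*cos s)^3)
          (3*((1+c^2)+(1-c^2)*cos s)^2*((1-c^2) * -sin s)) s := by
        have h2 : HasDerivAt (fun s : ℝ => (1+c^2)+(1-c^2)*cos s) ((1-c^2) * -sin s) s := by
          simpa using ((Real.hasDerivAt_cos s).const_mul (1-c^2)).const_add (1+c^2)
        exact h2.pow 3 |>.congr_deriv (by (try simp only [id_eq]); ring)
      have h3 : HasDerivAt (fun s => sin s * ((16*c^4/(3*(1-c^2)))*(1-(cos s)^2) - (4*c^2*((1-c^2)^2+((1+c^2)^2-2*(1-c^2)^2))/(1-c^2)^3)*((1+c^2)+(1-c^2)*(cos s))^2 - (2*(1+c^2)*c^2/(1-c^2)^2)*(((1-c^2)+(1+c^2)*(cos s))*((1+c^2)+(1-c^2)*(cos s))))/((1+c^2)+(1-c^2)*cos s)^3)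
          (((cos s * ((16*c^4/(3*(1-c^2)))*(1-(cos s)^2) - (4*c^2*((1-c^2)^2+((1+c^2)^2-2*(1-c^2)^2))/(1-c^2)^3)*((1+c^2)+(1-c^2)*(cos s))^2 - (2*(1+c^2)*c^2/(1-c^2)^2)*(((1-c^2)+(1+c^2)*(cos s))*((1+c^2)+(1-c^2)*(cos s)))) - sin s^2 * ((16*c^4/(3*(1-c^2)))*(-(2*(cos s))) - (4*c^2*((1-c^2)^2+((1+c^2)^2-2*(1-c^2)^2))/(1-c^2)^3)*(2*((1+c^2)+(1-c^2)*(cos s))*(1-c^2)) - (2*(1+c^2)*c^2/(1-c^2)^2)*(((1+c^2)*((1+c^2)+(1-c^2)*(cos s)) + ((1-c^2)+(1+c^2)*(cos s))*(1-c^2)))))*((1+c^2)+(1-c^2)*cos s)^3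
            + 3*(1-c^2)*sin s^2*(((16*c^4/(3*(1-c^2)))*(1-(cos s)^2) - (4*c^2*((1-c^2)^2+((1+c^2)^2-2*(1-c^2)^2))/(1-c^2)^3)*((1+c^2)+(1-c^2)*(cos s))^2 - (2*(1+c^2)*c^2/(1-c^2)^2)*(((1-c^2)+(1+c^2)*(cos s))*((1+c^2)+(1-c^2)*(cos s)))))*((1+c^2)+(1-c^2)*cos s)^2)/(((1+c^2)+(1-c^2)*cos s)^3)^2) s := by
        have := hnum.div hden (pow_ne_zero 3 hDne)
        refine this.congr_deriv (Eq.symm ?_)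
        ring
      have hsum : HasDerivAt F
          ((16*c^4/(1-c^2)^4) - (c*(1+c^2)*(2*(1+c^2)^2-3*(1-c^2)^2)/(1-c^2)^4)*(2*c/((1+c^2)+(1-c^2)*cos s))
            + ((cos s * ((16*c^4/(3*(1-c^2)))*(1-(cos s)^2) - (4*c^2*((1-c^2)^2+((1+c^2)^2-2*(1-c^2)^2))/(1-c^2)^3)*((1+c^2)+(1-c^2)*(cos s))^2 - (2*(1+c^2)*c^2/(1-c^2)^2)*(((1-c^2)+(1+c^2)*(cos s))*((1+c^2)+(1-c^2)*(cos s)))) - sin s^2 * ((16*c^4/(3*(1-c^2)))*(-(2*(cos s))) - (4*c^2*((1-c^2)^2+((1+c^2)^2-2*(1-c^2)^2))/(1-c^2)^3)*(2*((1+c^2)+(1-c^2)*(cos s))*(1-c^2)) - (2*(1+c^2)*c^2/(1-c^2)^2)*(((1+c^2)*((1+c^2)+(1-c^2)*(cos s)) + ((1-c^2)+(1+c^2)*(cos s))*(1-c^2)))))*((1+c^2)+(1-c^2)*cos s)^3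
            + 3*(1-c^2)*sin s^2*(((16*c^4/(3*(1-c^2)))*(1-(cos s)^2) - (4*c^2*((1-c^2)^2+((1+c^2)^2-2*(1-c^2)^2))/(1-c^2)^3)*((1+c^2)+(1-c^2)*(cos s))^2 - (2*(1+c^2)*c^2/(1-c^2)^2)*(((1-c^2)+(1+c^2)*(cos s))*((1+c^2)+(1-c^2)*(cos s)))))*((1+c^2)+(1-c^2)*cos s)^2)/(((1+c^2)+(1-c^2)*cos s)^3)^2) s := by
        rw [hF]
        exact (((hasDerivAt_id s).const_mul (16*c^4/(1-c^2)^4) |>.congr_deriv (by (try simp only [id_eq]); ring)).sub (harc.const_mul (c*(1+c^2)*(2*(1+c^2)^2-3*(1-c^2)^2)/(1-c^2)^4))).add h3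
      refine hsum.congr_deriv (Eq.symm ?_)
      rw [show (2*c*sin s/((1+c^2)+(1-c^2)*cos s))^4
          = 16*c^4*((sin s^2)^2)/((1+c^2)+(1-c^2)*cos s)^4 by rw [div_pow]; ring, hp]
      have hDne' : 1 + c ^ 2 + cos s * (1 - c ^ 2) ≠ 0 := by rw [mul_comm]; exact hDne
      field_simp
      ring
    have hFcont : ContinuousOn F (Set.Icc 0 π) := by
      apply Continuous.continuousOn
      rw [hF]
      apply Continuous.add
      apply Continuous.sub
      · exact continuous_const.mul continuous_id
      · exact continuous_const.mul (Real.continuous_arccos.comp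
          (Continuous.div (by continuity) (by continuity) (fun s => (hD s).ne')))
      · exact Continuous.div (by continuity) (by continuity) (fun s => pow_ne_zero 3 (hD s).ne')
    have hInt : IntervalIntegrable (fun s => (2*c*sin s/((1+c^2)+(1-c^2)*cos s))^4)
        MeasureTheory.volume 0 π := hfc.intervalIntegrable 0 π
    rw [intervalIntegral.integral_eq_sub_of_hasDeriv_right_of_le Real.pi_pos.le hFcont
      (fun s hs => (hderiv s hs).hasDerivWithinAt) hInt]
    rw [hF]
    simp only [Real.cos_pi, Real.sin_pi, Real.cos_zero, Real.sin_zero]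
    rw [show ((1-c^2)+(1+c^2)*(-1))/((1+c^2)+(1-c^2)*(-1)) = -1 by
      rw [div_eq_iff (by nlinarith [mul_pos hc hc])]; ring]
    rw [show ((1-c^2)+(1+c^2)*1)/((1+c^2)+(1-c^2)*1) = 1 by
      rw [div_eq_iff (by norm_num)]; ring]
    rw [Real.arccos_neg_one, Real.arccos_one]
    have hcp1 : (c+1) ≠ 0 := by positivity
    field_simp
    ring
end

section
/- Let m ≥ 5 be an integer and let c > 0. Then ∫₀^π ( c·(1 + tan²(s/2)) / (1 + c²·tan²(s/2)) )² · (sin s)^{m−1} ds ≤ π·c·(c² + 4c + 1) / (c + 1)⁴. -/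
open Real

private lemma Dpos (c : ℝ) (hc : 0 < c) (s : ℝ) : 0 < (1 + c^2) + (1 - c^2) * cos s := by
  rcases eq_or_lt_of_le (neg_one_le_cos s) with h | h
  · rw [← h]; nlinarith
  · have h2 : 0 ≤ c^2 * (1 - cos s) := mul_nonneg (sq_nonneg c) (by linarith [cos_le_one s])
    nlinarith

private lemma Dbpos (c : ℝ) (hc : 0 < c) (s : ℝ) : 0 < (1 + c) + (1 - c) * cos s := by
  rcases eq_or_lt_of_le (neg_one_le_cos s) with h | h
  · rw [← h]; nlinarith
  · have h2 : 0 ≤ c * (1 - cos s) := mul_nonneg hc.le (by linarith [cos_le_one s])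
    nlinarith

set_option maxHeartbeats 1000000 in
private lemma ident (c x y : ℝ) (hc : 0 < c)
    (hxy : y^2 = 1 - x^2)
    (hD : (1 + c^2) + (1 - c^2) * x ≠ 0) (hDb : (1 + c) + (1 - c) * x ≠ 0)
    (hd : c^2 - 1 ≠ 0) :
    6*c^2/(c+1)^4
      + (-48*c^3*(1+c^2)/(c^2-1)^4) * (1 / (1 + ((c-1)*y/((1+c)+(1-c)*x)) ^ 2) *
          (((c-1)*x * ((1+c)+(1-c)*x) - (c-1)*y * ((1-c) * -y)) / ((1+c)+(1-c)*x)^2))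
      + (2*c^2*(3*c^2+5)/(c^2-1)^3) * x
      + (2*c^2/(c^2-1)^2) * (x * (1 + x) + y * -y)
      + (16*c^4/(c^2-1)^3) * ((x * ((1 + c^2) + (1 - c^2) * x) - y * ((1 - c^2) * -y))
          / ((1 + c^2) + (1 - c^2) * x)^2)
      = (2*c/((1 + c^2) + (1 - c^2) * x))^2 * y ^ 4 := by
  have h1x : 0 ≤ 1 - x^2 := by rw [← hxy]; positivity
  have hq2 : ((c-1)*y/((1+c)+(1-c)*x)) ^ 2
      = (c-1)^2*(1-x^2)/((1+c)+(1-c)*x)^2 := by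
    rw [div_pow, mul_pow, hxy]
  have hr2 : (c-1)*x * ((1+c)+(1-c)*x) - (c-1)*y * ((1-c) * -y)
      = (c-1)*x * ((1+c)+(1-c)*x) - (c-1)^2*(1-x^2) := by
    linear_combination (-((c-1)^2)) * hxy
  have hr3 : x * (1 + x) + y * -y = x * (1 + x) - (1-x^2) := by
    linear_combination (-1 : ℝ) * hxy
  have hr4 : x * ((1 + c^2) + (1 - c^2) * x) - y * ((1 - c^2) * -y)
      = x * ((1 + c^2) + (1 - c^2) * x) + (1-c^2)*(1-x^2) := by
    linear_combination (1-c^2) * hxy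
  have hr5 : y ^ 4 = (1-x^2)^2 := by linear_combination (y^2 + 1 - x^2) * hxy
  rw [hq2, hr2, hr3, hr4, hr5]
  have hpos : (0:ℝ) < 1 + (c-1)^2*(1-x^2)/((1+c)+(1-c)*x)^2 := by
    have h := div_nonneg (mul_nonneg (sq_nonneg (c-1)) h1x) (sq_nonneg ((1+c)+(1-c)*x))
    linarith
  have hc1 : c + 1 ≠ 0 := by positivity
  have hE : 1 + (c-1)^2*(1-x^2)/((1+c)+(1-c)*x)^2
      = (2*((1 + c^2) + (1 - c^2) * x))/((1+c)+(1-c)*x)^2 := by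
    rw [eq_div_iff (pow_ne_zero 2 hDb), add_mul, div_mul_cancel₀ _ (pow_ne_zero 2 hDb)]
    ring
  rw [hE]
  generalize hDdef : (1 + c^2) + (1 - c^2) * x = D at *
  generalize hDbdef : (1+c)+(1-c)*x = Db at *
  field_simp
  subst hDdef hDbdef
  ring

private lemma integral_g4 (c : ℝ) (hc : 0 < c) :
    ∫ s in (0:ℝ)..π, (2*c/((1 + c^2) + (1 - c^2) * cos s))^2 * sin s ^ 4
      = 6 * π * c^2 / (c+1)^4 := by
  by_cases hc1 : c = 1
  · subst hc1
    have h : ∀ s : ℝ, (2*1/((1 + 1^2) + (1 - 1^2) * cos s))^2 * sin s ^ 4 = sin s ^ (2*2) := by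
      intro s; norm_num
    rw [intervalIntegral.integral_congr (g := fun s => sin s ^ (2*2)) (fun s _ => h s),
      integral_sin_pow_even 2]
    rw [Finset.prod_range_succ, Finset.prod_range_succ, Finset.prod_range_zero]
    norm_num
    ring
  · have hD : ∀ s : ℝ, ((1 + c^2) + (1 - c^2) * cos s) ≠ 0 := fun s => (Dpos c hc s).ne'
    have hDb : ∀ s : ℝ, ((1 + c) + (1 - c) * cos s) ≠ 0 := fun s => (Dbpos c hc s).ne'
    have hd : c^2 - 1 ≠ 0 := by
      intro h
      rcases mul_eq_zero.1 (show (c-1)*(c+1) = 0 by linear_combination h) with h' | h'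
      · exact hc1 (by linarith)
      · linarith
    have hderiv : ∀ s ∈ Set.uIcc (0:ℝ) π,
        HasDerivAt (fun s : ℝ => 6*c^2/(c+1)^4*s
            + (-48*c^3*(1+c^2)/(c^2-1)^4) * arctan ((c-1)*sin s/((1+c)+(1-c)*cos s))
            + (2*c^2*(3*c^2+5)/(c^2-1)^3) * sin s
            + (2*c^2/(c^2-1)^2) * (sin s * (1 + cos s))
            + (16*c^4/(c^2-1)^3) * (sin s / ((1 + c^2) + (1 - c^2) * cos s)))
          ((2*c/((1 + c^2) + (1 - c^2) * cos s))^2 * sin s ^ 4) s := by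
      intro s _
      have hs := hasDerivAt_sin s
      have hcs := hasDerivAt_cos s
      have h1 : HasDerivAt (fun s : ℝ => 6*c^2/(c+1)^4*s) (6*c^2/(c+1)^4) s := by
        simpa using (hasDerivAt_id s).const_mul (6*c^2/(c+1)^4)
      have hq : HasDerivAt (fun s : ℝ => (c-1)*sin s/((1+c)+(1-c)*cos s))
          (((c-1)*cos s * ((1+c)+(1-c)*cos s) - (c-1)*sin s * ((1-c) * -sin s))
            / ((1+c)+(1-c)*cos s)^2) s :=
        (hs.const_mul (c-1)).div ((hcs.const_mul (1-c)).const_add (1+c)) (hDb s)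
      have h2 := hq.arctan.const_mul (-48*c^3*(1+c^2)/(c^2-1)^4)
      have h3 := hs.const_mul (2*c^2*(3*c^2+5)/(c^2-1)^3)
      have h4 := (hs.mul (hcs.const_add 1)).const_mul (2*c^2/(c^2-1)^2)
      have h5 := (hs.div ((hcs.const_mul (1-c^2)).const_add (1+c^2)) (hD s)).const_mul
        (16*c^4/(c^2-1)^3)
      have htot := (((h1.add h2).add h3).add h4).add h5
      have hxy : sin s ^ 2 = 1 - cos s ^ 2 := by
        have := sin_sq_add_cos_sq s; linarith
      have hkey := ident c (cos s) (sin s) hc hxy (hD s) (hDb s) hd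
      rw [← hkey]
      exact htot
    have hcont : Continuous fun s : ℝ => (2*c/((1 + c^2) + (1 - c^2) * cos s))^2 * sin s ^ 4 := by
      apply Continuous.mul
      · exact (continuous_const.div (by continuity) hD).pow 2
      · exact continuous_sin.pow 4
    rw [intervalIntegral.integral_eq_sub_of_hasDerivAt hderiv (hcont.intervalIntegrable 0 π)]
    simp only [sin_pi, cos_pi, sin_zero, cos_zero]
    norm_num
    ring

theorem stmt_14 (m : ℕ) (hm : 5 ≤ m) (c : ℝ) (hc : 0 < c) :
    ∫ s in (0:ℝ)..π,
        (c * (1 + tan (s / 2) ^ 2) / (1 + c ^ 2 * tan (s / 2) ^ 2)) ^ 2 * sin s ^ (m - 1) ≤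
      π * c * (c ^ 2 + 4 * c + 1) / (c + 1) ^ 4 := by
  have hD : ∀ s : ℝ, ((1 + c^2) + (1 - c^2) * cos s) ≠ 0 := fun s => (Dpos c hc s).ne'
  have hcongr : Set.EqOn
      (fun s => (c * (1 + tan (s / 2) ^ 2) / (1 + c ^ 2 * tan (s / 2) ^ 2)) ^ 2 * sin s ^ (m - 1))
      (fun s => (2*c/((1 + c^2) + (1 - c^2) * cos s))^2 * sin s ^ (m - 1))
      (Set.uIcc 0 π) := by
    intro s hs
    rw [Set.uIcc_of_le pi_pos.le] at hs
    by_cases hsin : sin s = 0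
    · have hm1 : m - 1 ≠ 0 := by omega
      simp [hsin, zero_pow hm1]
    · have hs0 : 0 < s := lt_of_le_of_ne hs.1 (by rintro rfl; simp at hsin)
      have hsπ : s < π := lt_of_le_of_ne hs.2 (by rintro rfl; simp at hsin)
      have hcos2 : 0 < cos (s/2) := by
        apply cos_pos_of_mem_Ioo
        constructor
        · linarith [pi_pos]
        · linarith
      have hcs : cos s = 2 * cos (s/2)^2 - 1 := by
        have h := cos_two_mul (s/2)
        rw [show 2*(s/2) = s by ring] at h
        exact h
      have hss : sin (s/2)^2 = 1 - cos (s/2)^2 := by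
        have := sin_sq_add_cos_sq (s/2); linarith
      have hden : 1 + c ^ 2 * tan (s / 2) ^ 2 ≠ 0 := by positivity
      have hc2 : cos (s/2) ≠ 0 := hcos2.ne'
      have hDs := hD s
      simp only
      congr 1
      rw [tan_eq_sin_div_cos]
      simp only [div_pow]
      rw [hss, hcs]
      rw [hcs] at hDs
      have h1C : (0:ℝ) ≤ 1 - cos (s/2)^2 := by rw [← hss]; positivity
      have hA : (1:ℝ) + c^2 * ((1 - cos (s/2)^2)/cos (s/2)^2) ≠ 0 := by
        have h2 : (0:ℝ) ≤ c^2 * ((1 - cos (s/2)^2)/cos (s/2)^2) :=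
          mul_nonneg (sq_nonneg c) (div_nonneg h1C (sq_nonneg _))
        intro h; linarith
      have hz : cos (s/2)^2 + c^2 * (1 - cos (s/2)^2) ≠ 0 := by
        have h2 : (0:ℝ) < cos (s/2)^2 := by positivity
        have h3 : (0:ℝ) ≤ c^2 * (1 - cos (s/2)^2) := mul_nonneg (sq_nonneg c) h1C
        intro h; linarith
      field_simp [hA, hz]
      ring
  rw [intervalIntegral.integral_congr hcongr]
  have hmono : ∫ s in (0:ℝ)..π, (2*c/((1 + c^2) + (1 - c^2) * cos s))^2 * sin s ^ (m - 1)
      ≤ ∫ s in (0:ℝ)..π, (2*c/((1 + c^2) + (1 - c^2) * cos s))^2 * sin s ^ 4 := by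
    apply intervalIntegral.integral_mono_on pi_pos.le
    · exact (((continuous_const.div (by continuity) hD).pow 2).mul
        (continuous_sin.pow _)).intervalIntegrable 0 π
    · exact (((continuous_const.div (by continuity) hD).pow 2).mul
        (continuous_sin.pow _)).intervalIntegrable 0 π
    · intro s hs
      apply mul_le_mul_of_nonneg_left _ (by positivity)
      exact pow_le_pow_of_le_one (sin_nonneg_of_mem_Icc ⟨hs.1, hs.2⟩) (sin_le_one s) (by omega)
  refine hmono.trans ?_
  rw [integral_g4 c hc]
  rw [div_le_div_iff₀ (by positivity) (by positivity)]
  have hπ := pi_pos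
  nlinarith [mul_nonneg (mul_nonneg hπ.le hc.le) (sq_nonneg (c-1)),
    pow_pos (show (0:ℝ) < c+1 by linarith) 4]
end

section
/- Let m ≥ 5 be an integer. Then the function c ↦ ∫₀^π ( c·(1 + tan²(s/2)) / (1 + c²·tan²(s/2)) )² · (sin s)^{m−1} ds tends to 0 as c tends to 0 from the right. -/
open Real

private lemma pow_aux (t : ℝ) (ht : 0 < t) (k : ℕ) :
    t ^ (k + 4) ≤ (1 + t ^ 2) ^ (k + 2) := by
  rcases le_total t 1 with h | h
  · calc t ^ (k + 4) ≤ 1 := pow_le_one₀ ht.le h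
    _ ≤ (1 + t ^ 2) ^ (k + 2) := one_le_pow₀ (by nlinarith)
  · calc t ^ (k + 4) ≤ t ^ (2 * (k + 2)) := pow_le_pow_right₀ h (by omega)
    _ = (t ^ 2) ^ (k + 2) := by rw [pow_mul]
    _ ≤ (1 + t ^ 2) ^ (k + 2) := by
        apply pow_le_pow_left₀ (by positivity); nlinarith

theorem stmt_15 (m : ℕ) (hm : 5 ≤ m) :
    Filter.Tendsto
      (fun c : ℝ => ∫ s in (0:ℝ)..π,
        (c * (1 + tan (s / 2) ^ 2) / (1 + c ^ 2 * tan (s / 2) ^ 2)) ^ 2 * sin s ^ (m - 1))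
      (nhdsWithin 0 (Set.Ioi 0)) (nhds 0) := by
  obtain ⟨k, rfl⟩ : ∃ k, m = k + 5 := ⟨m - 5, by omega⟩
  have hm1 : k + 5 - 1 = k + 4 := by omega
  have key : ∀ c : ℝ, 0 < c →
      ‖∫ s in (0:ℝ)..π,
        (c * (1 + tan (s / 2) ^ 2) / (1 + c ^ 2 * tan (s / 2) ^ 2)) ^ 2 * sin s ^ (k + 5 - 1)‖
        ≤ π * (2 ^ (k + 4) * c ^ 2) := by
    intro c hc
    have hb := intervalIntegral.norm_integral_le_of_norm_le_const
      (C := 2 ^ (k + 4) * c ^ 2) (a := (0:ℝ)) (b := π)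
      (f := fun s => (c * (1 + tan (s / 2) ^ 2) / (1 + c ^ 2 * tan (s / 2) ^ 2)) ^ 2
          * sin s ^ (k + 5 - 1)) ?_
    · calc _ ≤ 2 ^ (k + 4) * c ^ 2 * |π - 0| := hb
        _ = π * (2 ^ (k + 4) * c ^ 2) := by
            rw [sub_zero, abs_of_nonneg pi_pos.le]; ring
    · intro s hs
      rw [Set.uIoc_of_le pi_pos.le] at hs
      rcases eq_or_lt_of_le hs.2 with heq | hlt
      · subst heq
        simp [hm1, Real.sin_pi]
        positivity
      · -- 0 < s < π
        have hs0 : 0 < s := hs.1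
        have hhalf : s / 2 ∈ Set.Ioo 0 (π / 2) := ⟨by linarith, by linarith⟩
        have hcos : 0 < cos (s / 2) := cos_pos_of_mem_Ioo ⟨by linarith [hhalf.1, pi_pos], hhalf.2⟩
        have ht : 0 < tan (s / 2) := tan_pos_of_pos_of_lt_pi_div_two hhalf.1 hhalf.2
        set t := tan (s / 2) with htdef
        have hA : (0:ℝ) < 1 + t ^ 2 := by positivity
        have hsin : sin s = 2 * t / (1 + t ^ 2) := by
          have h2 : sin s = 2 * sin (s / 2) * cos (s / 2) := by
            rw [show s = 2 * (s / 2) by ring, Real.sin_two_mul]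
            ring_nf
          rw [h2, htdef, Real.tan_eq_sin_div_cos]
          have hc2 : cos (s / 2) ≠ 0 := ne_of_gt hcos
          field_simp
          linear_combination (sin (s / 2)) * sin_sq_add_cos_sq (s / 2)
        have hB : (1:ℝ) ≤ 1 + c ^ 2 * t ^ 2 := by nlinarith
        have hsinpos : 0 < sin s := by rw [hsin]; positivity
        simp only [Real.norm_eq_abs, hm1, ← htdef]
        rw [abs_of_nonneg (by positivity), hsin]
        have h1 : (c * (1 + t ^ 2) / (1 + c ^ 2 * t ^ 2)) ^ 2 ≤ (c * (1 + t ^ 2)) ^ 2 := by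
          apply pow_le_pow_left₀ (by positivity)
          exact div_le_self (by positivity) hB
        calc (c * (1 + t ^ 2) / (1 + c ^ 2 * t ^ 2)) ^ 2 * (2 * t / (1 + t ^ 2)) ^ (k + 4)
            ≤ (c * (1 + t ^ 2)) ^ 2 * (2 * t / (1 + t ^ 2)) ^ (k + 4) := by
              apply mul_le_mul_of_nonneg_right h1 (by positivity)
          _ = 2 ^ (k + 4) * c ^ 2 * (t ^ (k + 4) / (1 + t ^ 2) ^ (k + 2)) := by
              rw [div_pow, mul_pow, show (1 + t ^ 2) ^ (k + 4) = (1 + t ^ 2) ^ (k + 2) * (1 + t ^ 2) ^ 2 by ring]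
              field_simp
              ring
          _ ≤ 2 ^ (k + 4) * c ^ 2 * 1 := by
              apply mul_le_mul_of_nonneg_left _ (by positivity)
              rw [div_le_one (by positivity)]
              exact pow_aux t ht k
          _ = 2 ^ (k + 4) * c ^ 2 := by ring
  have hten : Filter.Tendsto (fun c : ℝ => π * (2 ^ (k + 4) * c ^ 2))
      (nhdsWithin 0 (Set.Ioi 0)) (nhds 0) := by
    have hcont : Continuous (fun c : ℝ => π * ((2:ℝ) ^ (k + 4) * c ^ 2)) := by
      continuity
    have := hcont.tendsto 0
    simp only [ne_eq, OfNat.ofNat_ne_zero, not_false_eq_true, zero_pow, mul_zero] at this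
    exact this.mono_left nhdsWithin_le_nhds
  exact squeeze_zero_norm' (eventually_nhdsWithin_of_forall key) hten
end
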